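/- Let α > 1 and γ = α^{-1} ∈ (0,1). If κ is an integer with 2 ≤ κ < ⌈α⌉ and x ∈ [0, γ], then ψ^{(κ)}(x) = ∫₀^x ψ^{(κ−1)}(y) dy. Moreover, the same identity holds for κ = ⌈α⌉ and x ∈ [κγ − 1, γ]. -/

import Mathlib

open scoped BigOperators

noncomputable section

/-- Distance from `x` to the nearest integer. -/
def nint (x : ℝ) : ℝ := |x - round x|

/-- The set of exponents `t` such that `liminf n^t ⟦γ n⟧ = 0`. -/
def typeSet (γ : ℝ) : Set ℝ :=
  {t : ℝ | Filter.liminf (fun n : ℕ => (n : ℝ) ^ t * nint (γ * n)) Filter.atTop = 0}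

/-- An irrational number is of finite type if its type set is bounded above. -/
def IsOfFiniteType (γ : ℝ) : Prop := BddAbove (typeSet γ)

/-- The type of an irrational number. -/
def irrType (γ : ℝ) : ℝ := sSup (typeSet γ)

/-- The Beatty sequence `B_{α,β}`, as a set of positive natural numbers. -/
def BeattySet (α β : ℝ) : Set ℕ :=
  {n : ℕ | 0 < n ∧ ∃ m : ℤ, (n : ℤ) = ⌊α * m + β⌋}

/-- The 1-periodic function equal to `1` on `(0, γ]` modulo one and `0` elsewhere. -/
def psi (γ : ℝ) (x : ℝ) : ℝ := if 0 < Int.fract x ∧ Int.fract x ≤ γ then 1 else 0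

/-- `psiConv γ κ` is the `κ`-fold convolution `ψ^{(κ)}` of `psi γ` with itself. -/
def psiConv (γ : ℝ) : ℕ → ℝ → ℝ
  | 0 => fun _ => 0
  | 1 => psi γ
  | (k + 2) => fun x => ∫ y in (0:ℝ)..1, psiConv γ (k + 1) (x - y) * psi γ y

/-- The singular series `𝔖_κ(N)`. -/
def singularSeries (κ : ℕ) (N : ℕ) : ℝ :=
  (∏ p ∈ N.primeFactors, (1 + (-1 : ℝ) ^ κ / ((p : ℝ) - 1) ^ (κ - 1))) *
    (∏' p : {p : ℕ // p.Prime ∧ ¬(p ∣ N)}, (1 + (-1 : ℝ) ^ (κ + 1) / (((p : ℕ) : ℝ) - 1) ^ κ))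

open Classical in
/-- `G_κ(N) = ∑_{n₁+⋯+n_κ=N, nᵢ ∈ B_{α,β}} Λ(n₁)⋯Λ(n_κ)`. -/
def beattyG (α β : ℝ) (κ N : ℕ) : ℝ :=
  ∑ f ∈ Finset.Nat.antidiagonalTuple κ N,
    ∏ i : Fin κ, (if f i ∈ BeattySet α β then ArithmeticFunction.vonMangoldt (f i) else 0)

/-- `e(x) = e^{2πix}`. -/
def e (x : ℝ) : ℂ := Complex.exp (2 * Real.pi * Complex.I * x)

/-- The Möbius function, real-valued. -/
def mu (n : ℕ) : ℝ := ((ArithmeticFunction.moebius n : ℤ) : ℝ)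

lemma psi_nonneg (γ x : ℝ) : 0 ≤ psi γ x := by unfold psi; split_ifs <;> norm_num

lemma psi_le_one (γ x : ℝ) : psi γ x ≤ 1 := by unfold psi; split_ifs <;> norm_num

lemma psi_measurable (γ : ℝ) : Measurable (psi γ) := by
  unfold psi
  exact Measurable.ite
    ((measurableSet_lt measurable_const measurable_fract).inter
      (measurableSet_le measurable_fract measurable_const))
    measurable_const measurable_const

lemma psiConv_measurable (γ : ℝ) : ∀ κ, Measurable (psiConv γ κ)
  | 0 => measurable_const
  | 1 => psi_measurable γ
  | (k+2) => by
    have IH := psiConv_measurable γ (k+1)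
    have h : ∀ x : ℝ, psiConv γ (k+2) x
        = ∫ y in Set.Ioc (0:ℝ) 1, psiConv γ (k+1) (x - y) * psi γ y := by
      intro x
      show (∫ y in (0:ℝ)..1, psiConv γ (k+1) (x - y) * psi γ y) = _
      exact intervalIntegral.integral_of_le zero_le_one
    have hm : MeasureTheory.StronglyMeasurable
        (fun p : ℝ × ℝ => psiConv γ (k+1) (p.1 - p.2) * psi γ p.2) :=
      ((IH.comp (measurable_fst.sub measurable_snd)).mul
        ((psi_measurable γ).comp measurable_snd)).stronglyMeasurable
    have := (hm.integral_prod_right'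
      (ν := MeasureTheory.volume.restrict (Set.Ioc (0:ℝ) 1))).measurable
    simpa [← h] using this

lemma psiConv_nonneg (γ : ℝ) : ∀ κ, ∀ x, 0 ≤ psiConv γ κ x
  | 0, x => le_refl 0
  | 1, x => psi_nonneg γ x
  | (k+2), x => by
    show 0 ≤ ∫ y in (0:ℝ)..1, psiConv γ (k+1) (x - y) * psi γ y
    apply intervalIntegral.integral_nonneg zero_le_one
    intro u _
    exact mul_nonneg (psiConv_nonneg γ (k+1) (x-u)) (psi_nonneg γ u)

lemma integrable_of_bounded {f : ℝ → ℝ} (hm : Measurable f)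
    (hb : ∀ x, |f x| ≤ 1) (a b : ℝ) : IntervalIntegrable f MeasureTheory.volume a b := by
  rw [intervalIntegrable_iff]
  apply MeasureTheory.Measure.integrableOn_of_bounded (M := 1)
  · rw [Set.uIoc]; exact ne_of_lt measure_Ioc_lt_top
  · exact hm.aestronglyMeasurable
  · exact MeasureTheory.ae_of_all _ (fun x => hb x)

lemma psiConv_le_one (γ : ℝ) : ∀ κ, ∀ x, psiConv γ κ x ≤ 1
  | 0, x => zero_le_one
  | 1, x => psi_le_one γ x
  | (k+2), x => by
    show (∫ y in (0:ℝ)..1, psiConv γ (k+1) (x - y) * psi γ y) ≤ 1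
    have hint : IntervalIntegrable (fun y => psiConv γ (k+1) (x - y) * psi γ y)
        MeasureTheory.volume 0 1 := by
      apply integrable_of_bounded
      · exact ((psiConv_measurable γ (k+1)).comp (measurable_const.sub measurable_id)).mul
          (psi_measurable γ)
      · intro y
        rw [abs_mul]
        calc |psiConv γ (k+1) (x - y)| * |psi γ y| ≤ 1 * 1 := by
              apply mul_le_mul
              · rw [abs_of_nonneg (psiConv_nonneg γ (k+1) (x-y))]
                exact psiConv_le_one γ (k+1) (x-y)
              · rw [abs_of_nonneg (psi_nonneg γ y)]; exact psi_le_one γ y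
              · exact abs_nonneg _
              · exact zero_le_one
          _ = 1 := by norm_num
    calc (∫ y in (0:ℝ)..1, psiConv γ (k+1) (x - y) * psi γ y)
        ≤ ∫ _ in (0:ℝ)..1, (1:ℝ) := by
          apply intervalIntegral.integral_mono_on zero_le_one hint intervalIntegrable_const
          intro y _
          calc psiConv γ (k+1) (x - y) * psi γ y ≤ 1 * 1 := by
                apply mul_le_mul (psiConv_le_one γ (k+1) (x-y)) (psi_le_one γ y)
                  (psi_nonneg γ y) zero_le_one
            _ = 1 := by norm_num
      _ = 1 := by simp

lemma psiConv_intervalIntegrable (γ : ℝ) (κ : ℕ) (a b : ℝ) :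
    IntervalIntegrable (psiConv γ κ) MeasureTheory.volume a b := by
  apply integrable_of_bounded (psiConv_measurable γ κ)
  intro x
  rw [abs_of_nonneg (psiConv_nonneg γ κ x)]
  exact psiConv_le_one γ κ x

lemma psi_periodic (γ : ℝ) : Function.Periodic (psi γ) 1 := by
  intro x; unfold psi; rw [Int.fract_add_one]

lemma psiConv_periodic (γ : ℝ) : ∀ κ, Function.Periodic (psiConv γ κ)  1
  | 0 => fun x => rfl
  | 1 => psi_periodic γ
  | (k+2) => by
    intro x
    show (∫ y in (0:ℝ)..1, psiConv γ (k+1) (x + 1 - y) * psi γ y)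
      = ∫ y in (0:ℝ)..1, psiConv γ (k+1) (x - y) * psi γ y
    apply intervalIntegral.integral_congr
    intro y _
    dsimp only
    have h : x + 1 - y = (x - y) + 1 := by ring
    rw [h, psiConv_periodic γ (k+1) (x - y)]

lemma psiConv_eq_zero (γ : ℝ) (hγ0 : 0 < γ) (hγ1 : γ < 1) :
    ∀ κ : ℕ, ∀ v : ℝ, 1 ≤ κ → (κ : ℝ) * γ < v → v ≤ 1 → psiConv γ κ v = 0
  | 0, v, h, _, _ => absurd h (by norm_num)
  | 1, v, _, h2, h3 => by
    push_cast at h2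
    show psi γ v = 0
    unfold psi
    rw [if_neg]
    rintro ⟨hf1, hf2⟩
    rcases lt_or_eq_of_le h3 with h4 | h4
    · rw [Int.fract_eq_self.mpr ⟨by nlinarith, h4⟩] at hf2
      nlinarith
    · rw [h4, Int.fract_one] at hf1
      exact lt_irrefl 0 hf1
  | (k+2), v, _, h2, h3 => by
    show (∫ y in (0:ℝ)..1, psiConv γ (k+1) (v - y) * psi γ y) = 0
    have heq : Set.EqOn (fun y => psiConv γ (k+1) (v - y) * psi γ y) 0 (Set.uIcc 0 1) := by
      intro y hy
      rw [Set.uIcc_of_le zero_le_one] at hy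
      obtain ⟨hy0, hy1⟩ := hy
      by_cases hyγ : 0 < y ∧ y ≤ γ
      · have hz : psiConv γ (k+1) (v - y) = 0 := by
          apply psiConv_eq_zero γ hγ0 hγ1 (k+1) (v - y) (Nat.le_add_left 1 k)
          · push_cast
            push_cast at h2
            nlinarith [hyγ.2]
          · nlinarith [hyγ.1]
        simp [hz]
      · have hz : psi γ y = 0 := by
          unfold psi
          rw [if_neg]
          rintro ⟨hf1, hf2⟩
          rcases lt_or_eq_of_le hy1 with h4 | h4
          · rw [Int.fract_eq_self.mpr ⟨hy0, h4⟩] at hf1 hf2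
            exact hyγ ⟨hf1, hf2⟩
          · rw [h4, Int.fract_one] at hf1
            exact lt_irrefl 0 hf1
        simp [hz]
    rw [intervalIntegral.integral_congr heq]
    simp

lemma psiConv_succ_eq (γ : ℝ) (hγ0 : 0 < γ) (hγ1 : γ < 1) (k : ℕ) (x : ℝ)
    (hx1 : ((k:ℝ)+2) * γ - 1 ≤ x) (hx2 : x ≤ γ) :
    psiConv γ (k+2) x = ∫ y in (0:ℝ)..x, psiConv γ (k+1) y := by
  have hintF : ∀ a b : ℝ, IntervalIntegrable (psiConv γ (k+1)) MeasureTheory.volume a b :=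
    psiConv_intervalIntegrable γ (k+1)
  have hintG : ∀ a b : ℝ, IntervalIntegrable
      (fun y => psiConv γ (k+1) (x - y) * psi γ y) MeasureTheory.volume a b := by
    intro a b
    apply integrable_of_bounded
    · exact ((psiConv_measurable γ (k+1)).comp (measurable_const.sub measurable_id)).mul
        (psi_measurable γ)
    · intro y
      rw [abs_mul, abs_of_nonneg (psiConv_nonneg γ (k+1) (x-y)),
        abs_of_nonneg (psi_nonneg γ y)]
      calc psiConv γ (k+1) (x - y) * psi γ y ≤ 1 * 1 :=
            mul_le_mul (psiConv_le_one γ (k+1) (x-y)) (psi_le_one γ y)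
              (psi_nonneg γ y) zero_le_one
        _ = 1 := by norm_num
  show (∫ y in (0:ℝ)..1, psiConv γ (k+1) (x - y) * psi γ y) = _
  have hsplit : (∫ y in (0:ℝ)..1, psiConv γ (k+1) (x - y) * psi γ y)
      = (∫ y in (0:ℝ)..γ, psiConv γ (k+1) (x - y) * psi γ y)
        + ∫ y in γ..(1:ℝ), psiConv γ (k+1) (x - y) * psi γ y :=
    (intervalIntegral.integral_add_adjacent_intervals (hintG 0 γ) (hintG γ 1)).symm
  have htail : (∫ y in γ..(1:ℝ), psiConv γ (k+1) (x - y) * psi γ y) = 0 := by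
    rw [intervalIntegral.integral_of_le hγ1.le]
    rw [MeasureTheory.setIntegral_congr_fun measurableSet_Ioc
      (g := fun _ => (0:ℝ))]
    · simp
    · intro y hy
      obtain ⟨hy1, hy2⟩ := hy
      have hz : psi γ y = 0 := by
        unfold psi
        rw [if_neg]
        rintro ⟨hf1, hf2⟩
        rcases lt_or_eq_of_le hy2 with h4 | h4
        · rw [Int.fract_eq_self.mpr ⟨by linarith, h4⟩] at hf2
          linarith
        · rw [h4, Int.fract_one] at hf1
          exact lt_irrefl 0 hf1
      simp [hz]
  have hhead : (∫ y in (0:ℝ)..γ, psiConv γ (k+1) (x - y) * psi γ y)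
      = ∫ y in (0:ℝ)..γ, psiConv γ (k+1) (x - y) := by
    rw [intervalIntegral.integral_of_le hγ0.le, intervalIntegral.integral_of_le hγ0.le]
    apply MeasureTheory.setIntegral_congr_fun measurableSet_Ioc
    intro y hy
    obtain ⟨hy1, hy2⟩ := hy
    have hone : psi γ y = 1 := by
      unfold psi
      rw [if_pos]
      rw [Int.fract_eq_self.mpr ⟨hy1.le, lt_of_le_of_lt hy2 hγ1⟩]
      exact ⟨hy1, hy2⟩
    simp [hone]
  have hsub : (∫ y in (0:ℝ)..γ, psiConv γ (k+1) (x - y))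
      = ∫ u in (x - γ)..x, psiConv γ (k+1) u := by
    rw [intervalIntegral.integral_comp_sub_left (psiConv γ (k+1)) x]
    norm_num
  have hneg : (∫ u in (x - γ)..(0:ℝ), psiConv γ (k+1) u) = 0 := by
    have hc : (∫ u in (x - γ)..(0:ℝ), psiConv γ (k+1) u)
        = ∫ u in (x - γ)..(0:ℝ), psiConv γ (k+1) (u + 1) := by
      apply intervalIntegral.integral_congr
      intro u _
      dsimp only
      exact (psiConv_periodic γ (k+1) u).symm
    have hper : (∫ u in (x - γ)..(0:ℝ), psiConv γ (k+1) u)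
        = ∫ u in (x - γ + 1)..(1:ℝ), psiConv γ (k+1) u := by
      rw [hc, intervalIntegral.integral_comp_add_right]
      norm_num
    rw [hper, intervalIntegral.integral_of_le (by linarith)]
    rw [MeasureTheory.setIntegral_congr_fun measurableSet_Ioc (g := fun _ => (0:ℝ))]
    · simp
    · intro v hv
      obtain ⟨hv1, hv2⟩ := hv
      apply psiConv_eq_zero γ hγ0 hγ1 (k+1) v (Nat.le_add_left 1 k)
      · push_cast
        nlinarith
      · exact hv2
  have hadj : (∫ u in (x - γ)..x, psiConv γ (k+1) u)
      = (∫ u in (x - γ)..(0:ℝ), psiConv γ (k+1) u) + ∫ u in (0:ℝ)..x, psiConv γ (k+1) u :=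
    (intervalIntegral.integral_add_adjacent_intervals (hintF _ _) (hintF _ _)).symm
  rw [hsplit, htail, hhead, hsub, hadj, hneg]
  ring

theorem statement16 (α : ℝ) (hα : 1 < α) (κ : ℕ) :
    (2 ≤ κ → κ < ⌈α⌉₊ → ∀ x ∈ Set.Icc (0 : ℝ) α⁻¹,
      psiConv α⁻¹ κ x = ∫ y in (0 : ℝ)..x, psiConv α⁻¹ (κ - 1) y) ∧
    (κ = ⌈α⌉₊ → ∀ x ∈ Set.Icc ((κ : ℝ) * α⁻¹ - 1) α⁻¹,
      psiConv α⁻¹ κ x = ∫ y in (0 : ℝ)..x, psiConv α⁻¹ (κ - 1) y) := by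
  have hα0 : (0:ℝ) < α := lt_trans one_pos hα
  have hγ0 : 0 < α⁻¹ := inv_pos.mpr hα0
  have hγ1 : α⁻¹ < 1 := by
    rw [inv_lt_one_iff₀]
    right
    exact hα
  constructor
  · intro h2 hlt x hx
    obtain ⟨k, rfl⟩ : ∃ k, κ = k + 2 := ⟨κ - 2, by omega⟩
    have hκα : ((k:ℝ) + 2) < α := by
      have h1 : (k + 2 : ℕ) + 1 ≤ ⌈α⌉₊ := hlt
      have hc : (⌈α⌉₊ : ℝ) < α + 1 := Nat.ceil_lt_add_one hα0.le
      have h3 : ((k+2:ℕ):ℝ) + 1 ≤ (⌈α⌉₊:ℝ) := by exact_mod_cast h1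
      push_cast at h3 ⊢
      linarith
    have hb : ((k:ℝ)+2) * α⁻¹ - 1 ≤ x := by
      have hlt1 : ((k:ℝ)+2) * α⁻¹ < α * α⁻¹ := mul_lt_mul_of_pos_right hκα hγ0
      rw [mul_inv_cancel₀ (ne_of_gt hα0)] at hlt1
      linarith [hx.1]
    simpa using psiConv_succ_eq α⁻¹ hγ0 hγ1 k x hb hx.2
  · intro hk x hx
    have h2 : 2 ≤ κ := by
      rw [hk]
      have : 1 < ⌈α⌉₊ := Nat.lt_ceil.mpr (by exact_mod_cast hα)
      omega
    obtain ⟨k, rfl⟩ : ∃ k, κ = k + 2 := ⟨κ - 2, by omega⟩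
    have hb : ((k:ℝ)+2) * α⁻¹ - 1 ≤ x := by
      have h1 := hx.1
      push_cast at h1 ⊢
      linarith
    simpa using psiConv_succ_eq α⁻¹ hγ0 hγ1 k x hb hx.2

end
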